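/- Let E be a d-dimensional real inner product space (d ≥ 1) with orthonormal basis (e_s)_{s=1}^{d}, let j ≥ 1, and let α : {1,…,d}^j → ℝ be a coefficient array with ν = (Σ_{s ∈ {1,…,d}^j} α(s)²)^{1/2}. Then there exist vectors X_{n,i} ∈ E for n = 1, …, d^j and i = 1, …, j such that: (i) in the j-fold tensor power E^{⊗j} one has Σ_{n=1}^{d^j} X_{n,1} ⊗ ⋯ ⊗ X_{n,j} = Σ_{s} α(s) · e_{s₁} ⊗ ⋯ ⊗ e_{s_j}; (ii) ‖X_{n,1}‖ = ‖X_{n,2}‖ = ⋯ = ‖X_{n,j}‖ for every n; (iii) Σ_{n=1}^{d^j} ∏_{i=1}^{j} ‖X_{n,i}‖² = ν²; and (iv) Σ_{n=1}^{d^j} Σ_{i=1}^{j} ‖X_{n,i}‖ ≤ j · d^{(2j−1)/2} · ν^{1/j}. -/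

import Mathlib

open scoped BigOperators

private lemma real_sign_mul_abs (x : ℝ) : Real.sign x * |x| = x := by
  rcases lt_trichotomy x 0 with h | h | h
  · rw [Real.sign_of_neg h, abs_of_neg h]; ring
  · simp [h]
  · rw [Real.sign_of_pos h, abs_of_pos h]; ring

private lemma real_abs_sign_of_ne_zero {x : ℝ} (h : x ≠ 0) : |Real.sign x| = 1 := by
  rcases Real.sign_apply_eq_of_ne_zero x h with h' | h' <;> rw [h'] <;> norm_num

/-- Existence of an "adjusted" family of horizontal vectors. Let `E` be a `d`-dimensional
real inner product space (`d ≥ 1`) with orthonormal basis `(e_s)`, `j ≥ 1`, and let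
`α : {1,…,d}^j → ℝ` with `ν = (Σ_s α(s)²)^{1/2}`. Then there are vectors `X_{n,i} ∈ E`
(`n = 1, …, d^j`, `i = 1, …, j`) such that: (i) `Σ_n X_{n,1} ⊗ ⋯ ⊗ X_{n,j}` equals
`Σ_s α(s) e_{s₁} ⊗ ⋯ ⊗ e_{s_j}` in the `j`-fold tensor power `E^{⊗j}`; (ii) for each `n`
all the `‖X_{n,i}‖` coincide; (iii) `Σ_n ∏_i ‖X_{n,i}‖² = ν²`; and (iv) the combinatorial
distance satisfies `Σ_n Σ_i ‖X_{n,i}‖ ≤ j · d^{(2j−1)/2} · ν^{1/j}`. -/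
theorem exists_adjusted_horizontal_vectors
    {E : Type*} [NormedAddCommGroup E] [InnerProductSpace ℝ E]
    (d : ℕ) (hd : 1 ≤ d) (b : OrthonormalBasis (Fin d) ℝ E)
    (j : ℕ) (hj : 1 ≤ j)
    (α : (Fin j → Fin d) → ℝ)
    (ν : ℝ) (hν : ν = Real.sqrt (∑ s : Fin j → Fin d, α s ^ 2)) :
    ∃ X : Fin (d ^ j) → Fin j → E,
      (∑ n : Fin (d ^ j), PiTensorProduct.tprod ℝ (X n)) =
        (∑ s : Fin j → Fin d, α s •
          PiTensorProduct.tprod ℝ (fun i : Fin j => b (s i))) ∧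
      (∀ (n : Fin (d ^ j)) (i i' : Fin j), ‖X n i‖ = ‖X n i'‖) ∧
      (∑ n : Fin (d ^ j), ∏ i : Fin j, ‖X n i‖ ^ 2) = ν ^ 2 ∧
      (∑ n : Fin (d ^ j), ∑ i : Fin j, ‖X n i‖) ≤
        j * (d : ℝ) ^ ((2 * (j : ℝ) - 1) / 2) * ν ^ ((1 : ℝ) / j) := by
  have hjR : (j : ℝ) ≠ 0 := by positivity
  have hj0 : j ≠ 0 := by omega
  -- the equivalence between `Fin (d^j)` and `Fin j → Fin d`
  have hcard : Fintype.card (Fin j → Fin d) = d ^ j := by simp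
  let e : Fin (d ^ j) ≃ (Fin j → Fin d) := (Fintype.equivFinOfCardEq hcard).symm
  -- the common norm
  set t : (Fin j → Fin d) → ℝ := fun s => |α s| ^ ((1 : ℝ) / j) with ht
  have ht0 : ∀ s, 0 ≤ t s := fun s => Real.rpow_nonneg (abs_nonneg _) _
  have htj : ∀ s, t s ^ j = |α s| := by
    intro s
    rw [ht, ← Real.rpow_natCast (|α s| ^ ((1:ℝ)/j)) j, ← Real.rpow_mul (abs_nonneg _),
      one_div, inv_mul_cancel₀ hjR, Real.rpow_one]
  have ht2j : ∀ s, t s ^ (2 * j) = α s ^ 2 := by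
    intro s
    rw [mul_comm 2 j, pow_mul, htj, sq_abs]
  -- the coefficients
  set i0 : Fin j := ⟨0, hj⟩ with hi0
  set c : (Fin j → Fin d) → Fin j → ℝ :=
    fun s i => (if i = i0 then Real.sign (α s) else 1) * t s with hc
  set X : Fin (d ^ j) → Fin j → E := fun n i => c (e n) i • b (e n i) with hX
  have habs : ∀ s i, |c s i| = t s := by
    intro s i
    rw [hc]
    dsimp only
    by_cases hα : α s = 0
    · have : t s = 0 := by
        rw [ht]; dsimp only; rw [hα, abs_zero, Real.zero_rpow (by positivity)]
      simp [this]
    · rw [abs_mul, abs_of_nonneg (ht0 s)]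
      split_ifs with h
      · rw [real_abs_sign_of_ne_zero hα, one_mul]
      · rw [abs_one, one_mul]
  have hnorm : ∀ (n : Fin (d ^ j)) (i : Fin j), ‖X n i‖ = t (e n) := by
    intro n i
    rw [hX]
    dsimp only
    rw [norm_smul, b.orthonormal.1 (e n i), mul_one, Real.norm_eq_abs, habs]
  have hprod : ∀ s, ∏ i : Fin j, c s i = α s := by
    intro s
    rw [hc]
    dsimp only
    rw [Finset.prod_mul_distrib, Finset.prod_const, Finset.card_univ, Fintype.card_fin,
      Finset.prod_ite_eq' Finset.univ i0 (fun _ => Real.sign (α s))]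
    simp only [Finset.mem_univ, if_true]
    rw [htj, real_sign_mul_abs]
  have hν0 : 0 ≤ ν := hν ▸ Real.sqrt_nonneg _
  have hν2 : ν ^ 2 = ∑ s : Fin j → Fin d, α s ^ 2 := by
    rw [hν, Real.sq_sqrt (Finset.sum_nonneg fun s _ => sq_nonneg _)]
  refine ⟨X, ?_, ?_, ?_, ?_⟩
  · -- (i)
    rw [← Equiv.sum_comp e (fun s => α s • PiTensorProduct.tprod ℝ (fun i : Fin j => b (s i)))]
    refine Finset.sum_congr rfl fun n _ => ?_
    have : (PiTensorProduct.tprod ℝ (X n)) =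
        (∏ i : Fin j, c (e n) i) • PiTensorProduct.tprod ℝ (fun i : Fin j => b (e n i)) := by
      rw [hX]
      exact (PiTensorProduct.tprod ℝ).map_smul_univ (c (e n)) (fun i => b (e n i))
    rw [this, hprod]
  · -- (ii)
    intro n i i'
    rw [hnorm, hnorm]
  · -- (iii)
    rw [hν2, ← Equiv.sum_comp e (fun s => α s ^ 2)]
    refine Finset.sum_congr rfl fun n _ => ?_
    simp only [hnorm]
    rw [Finset.prod_const, Finset.card_univ, Fintype.card_fin, ← pow_mul, ht2j]
  · -- (iv)
    have hsum : (∑ n : Fin (d ^ j), ∑ i : Fin j, ‖X n i‖) =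
        j * ∑ s : Fin j → Fin d, t s := by
      rw [Finset.mul_sum, ← Equiv.sum_comp e (fun s => (j : ℝ) * t s)]
      refine Finset.sum_congr rfl fun n _ => ?_
      simp only [hnorm]
      rw [Finset.sum_const, Finset.card_univ, Fintype.card_fin, nsmul_eq_mul]
    rw [hsum]
    rw [mul_assoc]
    refine mul_le_mul_of_nonneg_left ?_ (by positivity)
    -- Jensen: S^(2j) ≤ (d^j)^(2j-1) * ν^2
    set S : ℝ := ∑ s : Fin j → Fin d, t s with hS
    have hS0 : 0 ≤ S := Finset.sum_nonneg fun s _ => ht0 s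
    have key : S ^ (2 * j) ≤ ((d : ℝ) ^ j) ^ (2 * j - 1) * ν ^ 2 := by
      have h := pow_sum_div_card_le_sum_pow
        (s := Finset.univ) (f := t) (fun s _ => ht0 s) (2 * j - 1)
      have h2j : 2 * j - 1 + 1 = 2 * j := by omega
      rw [h2j, Finset.card_univ, hcard] at h
      have hsum2 : (∑ s : Fin j → Fin d, t s ^ (2 * j)) = ν ^ 2 := by
        rw [hν2]; exact Finset.sum_congr rfl fun s _ => ht2j s
      rw [hsum2] at h
      rw [div_le_iff₀ (by positivity)] at h
      calc S ^ (2 * j) ≤ ν ^ 2 * ((d : ℝ) ^ j : ℝ) ^ (2 * j - 1) := by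
            convert h using 2; rfl; push_cast; ring
        _ = ((d : ℝ) ^ j) ^ (2 * j - 1) * ν ^ 2 := by ring
    -- take (2j)-th root
    have hd0 : (0:ℝ) < d := by exact_mod_cast hd
    have h2jR : (0:ℝ) < 2 * j := by positivity
    have hroot : S = (S ^ (2 * j)) ^ ((2 * (j:ℝ))⁻¹) := by
      rw [← Real.rpow_natCast S (2 * j), ← Real.rpow_mul hS0]
      push_cast
      rw [mul_inv_cancel₀ (by positivity), Real.rpow_one]
    rw [hroot]
    have hmono := Real.rpow_le_rpow (by positivity) key (le_of_lt (inv_pos.mpr h2jR))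
    refine hmono.trans (le_of_eq ?_)
    rw [Real.mul_rpow (by positivity) (by positivity)]
    congr 1
    · rw [← pow_mul, ← Real.rpow_natCast (d:ℝ) (j * (2 * j - 1)),
        ← Real.rpow_mul hd0.le]
      congr 1
      have : ((j * (2 * j - 1) : ℕ) : ℝ) = (j : ℝ) * (2 * (j:ℝ) - 1) := by
        push_cast [Nat.cast_sub (by omega : 1 ≤ 2 * j)]; ring
      rw [this]
      field_simp
    · rw [← Real.rpow_natCast ν 2, ← Real.rpow_mul hν0]
      congr 1
      field_simp
      norm_num
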